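/- arXiv:2104.10352 — 3 statements merged into one kernel-verified Lean document; each statement's English description precedes it below -/
import Mathlib

section
/- Let M₁, M₂ ∈ Mat_{n×n}(ℝ) be symmetric positive definite, A ∈ Mat_{n×n}(ℝ), B ∈ Mat_{n×m}(ℝ), K ∈ Mat_{m×n}(ℝ), and 0 < β ≤ 1. Define W₁ := M₁⁻¹, W₂ := M₂⁻¹ and L := K W₁. Then the contraction condition (A + B K)ᵀ M₂ (A + B K) − (1 − β) M₁ ≺ 0 (i.e. (1 − β) M₁ − (A + B K)ᵀ M₂ (A + B K) is positive definite) holds if and only if the symmetric 2n×2n block matrix [[W₂, A W₁ + B L], [(A W₁ + B L)ᵀ, (1 − β) W₁]] is positive definite. -/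
open Matrix

/-- Congruence by an invertible matrix preserves positive definiteness (real case). -/
lemma posDef_conj_aux {p : ℕ} {M N : Matrix (Fin p) (Fin p) ℝ}
    (hM : M.PosDef) (hN : IsUnit N) : (Nᵀ * M * N).PosDef := by
  rw [posDef_iff_dotProduct_mulVec]
  constructor
  · have hMt : Mᵀ = M := by
      have := hM.1
      rwa [Matrix.IsHermitian, conjTranspose_eq_transpose_of_trivial] at this
    rw [Matrix.IsHermitian, conjTranspose_eq_transpose_of_trivial]
    simp [Matrix.transpose_mul, Matrix.mul_assoc, hMt]
  · intro x hx
    have hNx : N *ᵥ x ≠ 0 :=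
      (Matrix.mulVec_injective_iff_isUnit.mpr hN |>.ne_iff' (by simp)).2 hx
    have := hM.dotProduct_mulVec_pos hNx
    simpa [star_trivial, ← Matrix.mulVec_mulVec, Matrix.dotProduct_mulVec,
      Matrix.vecMul_transpose, Matrix.mul_assoc] using this

/-- Schur complement criterion for positive definiteness of a real block matrix. -/
lemma posDef_fromBlocks_aux {p q : ℕ} {A : Matrix (Fin p) (Fin p) ℝ}
    (B : Matrix (Fin p) (Fin q) ℝ) (D : Matrix (Fin q) (Fin q) ℝ)
    (hA : A.PosDef) [Invertible A] :
    (Matrix.fromBlocks A B Bᴴ D).PosDef ↔ (D - Bᴴ * A⁻¹ * B).PosDef := by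
  rw [posDef_iff_dotProduct_mulVec, posDef_iff_dotProduct_mulVec, Matrix.IsHermitian.fromBlocks₁₁ _ _ hA.1]
  constructor
  · rintro ⟨h1, h2⟩
    refine ⟨h1, fun y hy => ?_⟩
    have hxy : (Sum.elim (-((A⁻¹ * B) *ᵥ y)) y : Fin p ⊕ Fin q → ℝ) ≠ 0 := by
      intro h
      apply hy
      funext i
      exact congrFun h (Sum.inr i)
    have := h2 hxy
    rw [Matrix.dotProduct_mulVec, Matrix.schur_complement_eq₁₁ B D _ _ hA.1,
      neg_add_cancel] at this
    rw [Matrix.dotProduct_mulVec]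
    simpa using this
  · rintro ⟨h1, h2⟩
    refine ⟨h1, fun z hz => ?_⟩
    have hsplit : z = Sum.elim (z ∘ Sum.inl) (z ∘ Sum.inr) := by
      funext i; cases i <;> rfl
    rw [Matrix.dotProduct_mulVec, hsplit,
      Matrix.schur_complement_eq₁₁ B D _ _ hA.1,
      ← Matrix.dotProduct_mulVec, ← Matrix.dotProduct_mulVec]
    by_cases hy : (z ∘ Sum.inr) = 0
    · have hx : (z ∘ Sum.inl) + (A⁻¹ * B) *ᵥ (z ∘ Sum.inr) ≠ 0 := by
        rw [hy, Matrix.mulVec_zero, add_zero]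
        intro h
        apply hz
        funext i
        cases i with
        | inl i => exact congrFun h i
        | inr i => exact congrFun hy i
      have h1' := hA.dotProduct_mulVec_pos hx
      have h0 : star (z ∘ Sum.inr) ⬝ᵥ (D - Bᴴ * A⁻¹ * B) *ᵥ (z ∘ Sum.inr) = 0 := by
        rw [hy]; simp
      linarith
    · have h1' := hA.posSemidef.dotProduct_mulVec_nonneg ((z ∘ Sum.inl) + (A⁻¹ * B) *ᵥ (z ∘ Sum.inr))
      have h2' := h2 hy
      linarith

/-- With `W₁ = M₁⁻¹`, `W₂ = M₂⁻¹` and `L = K W₁`, the contraction condition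
`(A + B K)ᵀ M₂ (A + B K) − (1 − β) M₁ ≺ 0` holds if and only if the block matrix
`[[W₂, A W₁ + B L], [(A W₁ + B L)ᵀ, (1 − β) W₁]]` is positive definite. -/
theorem stmt4 {n m : ℕ}
    (M₁ M₂ : Matrix (Fin n) (Fin n) ℝ) (hM₁ : M₁.PosDef) (hM₂ : M₂.PosDef)
    (A : Matrix (Fin n) (Fin n) ℝ) (B : Matrix (Fin n) (Fin m) ℝ)
    (K : Matrix (Fin m) (Fin n) ℝ)
    (β : ℝ) (hβ0 : 0 < β) (hβ1 : β ≤ 1)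
    (W₁ W₂ : Matrix (Fin n) (Fin n) ℝ) (L : Matrix (Fin m) (Fin n) ℝ)
    (hW₁ : W₁ = M₁⁻¹) (hW₂ : W₂ = M₂⁻¹) (hL : L = K * W₁) :
    (((1 - β) • M₁) - (A + B * K)ᵀ * M₂ * (A + B * K)).PosDef ↔
    (Matrix.fromBlocks W₂ (A * W₁ + B * L) (A * W₁ + B * L)ᵀ ((1 - β) • W₁)).PosDef := by
  have hW₁pd : W₁.PosDef := hW₁ ▸ hM₁.inv
  have hW₂pd : W₂.PosDef := hW₂ ▸ hM₂.inv
  haveI : Invertible W₂ := hW₂pd.isUnit.invertible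
  set X := A + B * K with hX
  have hXW : A * W₁ + B * L = X * W₁ := by
    rw [hL, hX, Matrix.add_mul, Matrix.mul_assoc]
  have hW₁t : W₁ᵀ = W₁ := by
    have := hW₁pd.1
    rwa [Matrix.IsHermitian, conjTranspose_eq_transpose_of_trivial] at this
  have hW₂inv : W₂⁻¹ = M₂ := by rw [hW₂, Matrix.nonsing_inv_nonsing_inv _ hM₂.det_pos.ne'.isUnit]
  have hW₁M₁ : W₁ * M₁ = 1 := by
    rw [hW₁]; exact Matrix.nonsing_inv_mul M₁ hM₁.det_pos.ne'.isUnit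
  have hM₁W₁ : M₁ * W₁ = 1 := by
    rw [hW₁]; exact Matrix.mul_nonsing_inv M₁ hM₁.det_pos.ne'.isUnit
  -- the block matrix condition via Schur complement
  have hblock : (Matrix.fromBlocks W₂ (X * W₁) (X * W₁)ᴴ ((1 - β) • W₁)).PosDef ↔
      ((1 - β) • W₁ - (X * W₁)ᴴ * W₂⁻¹ * (X * W₁)).PosDef :=
    posDef_fromBlocks_aux (X * W₁) ((1 - β) • W₁) hW₂pd
  have hconj : (1 - β) • W₁ - (X * W₁)ᴴ * W₂⁻¹ * (X * W₁) =
      W₁ᵀ * (((1 - β) • M₁) - Xᵀ * M₂ * X) * W₁ := by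
    rw [conjTranspose_eq_transpose_of_trivial, hW₂inv]
    have : W₁ᵀ * ((1 - β) • M₁) * W₁ = (1 - β) • W₁ := by
      rw [hW₁t, Matrix.mul_smul, Matrix.smul_mul, Matrix.mul_assoc, hM₁W₁, Matrix.mul_one]
    rw [Matrix.mul_sub, Matrix.sub_mul, this]
    congr 1
    rw [Matrix.transpose_mul, hW₁t]
    noncomm_ring
  constructor
  · intro h
    rw [hXW, ← conjTranspose_eq_transpose_of_trivial (X * W₁), hblock, hconj]
    exact posDef_conj_aux h hW₁pd.isUnit
  · intro h
    rw [hXW, ← conjTranspose_eq_transpose_of_trivial (X * W₁), hblock, hconj] at h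
    have := posDef_conj_aux h hM₁.isUnit
    have hM₁t : M₁ᵀ = M₁ := by
      have := hM₁.1
      rwa [Matrix.IsHermitian, conjTranspose_eq_transpose_of_trivial] at this
    have key : M₁ᵀ * (W₁ᵀ * (((1 - β) • M₁) - Xᵀ * M₂ * X) * W₁) * M₁ =
        ((1 - β) • M₁) - Xᵀ * M₂ * X := by
      rw [hW₁t, hM₁t, ← Matrix.mul_assoc, ← Matrix.mul_assoc, hM₁W₁, Matrix.one_mul,
        Matrix.mul_assoc, hW₁M₁, Matrix.mul_one]
    rwa [key] at this
end

section
/- Let n, m ∈ ℕ, let W : ℝⁿ → Mat_{n×n}(ℝ) assign to each state a symmetric positive definite matrix, and let L : ℝⁿ → Mat_{m×n}(ℝ). Define M(x) := W(x)⁻¹ and K(x) := L(x) W(x)⁻¹. Let 0 < β ≤ 1 and suppose that for all x ∈ ℝⁿ and u ∈ ℝᵐ the block matrix [[W(f(x) + g(x)u), A(x,u) W(x) + B(x) L(x)], [(A(x,u) W(x) + B(x) L(x))ᵀ, (1 − β) W(x)]] is positive definite, where A(x,u) = ∂(f(x) + g(x)u)/∂x and B(x) = g(x). Then M(x) is symmetric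 positive definite for all x, and for all x, u the closed-loop contraction condition (A(x,u) + B(x) K(x))ᵀ M(f(x)+g(x)u) (A(x,u) + B(x) K(x)) − (1 − β) M(x) ≺ 0 holds. -/
open Matrix

section Aux

variable {p q : Type*} [Fintype p] [Fintype q] [DecidableEq p] [DecidableEq q]

/-- Strict Schur complement lemma: if the block matrix is PosDef then so is the
Schur complement of the (1,1) block. -/
lemma posDef_schur {A : Matrix p p ℝ} {B : Matrix p q ℝ} {D : Matrix q q ℝ}
    (hA : A.PosDef) (h : (Matrix.fromBlocks A B Bᴴ D).PosDef) :
    (D - Bᴴ * A⁻¹ * B).PosDef := by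
  haveI := hA.isUnit.invertible
  rw [Matrix.posDef_iff_dotProduct_mulVec]
  constructor
  · exact (Matrix.IsHermitian.fromBlocks₁₁ B D hA.1).mp h.1
  · intro y hy
    have key := Matrix.schur_complement_eq₁₁ B D (-((A⁻¹ * B) *ᵥ y)) y hA.1
    have hxy : (Sum.elim (-((A⁻¹ * B) *ᵥ y)) y : p ⊕ q → ℝ) ≠ 0 := by
      intro hcontra
      apply hy
      funext i
      have := congrFun hcontra (Sum.inr i)
      simpa using this
    have hpos := h.dotProduct_mulVec_pos hxy
    rw [Matrix.dotProduct_mulVec, key] at hpos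
    rw [Matrix.dotProduct_mulVec]
    simpa using hpos

/-- Conjugation by an invertible matrix preserves positive definiteness. -/
lemma posDef_conj {S N : Matrix p p ℝ} (hS : S.PosDef) (hN : IsUnit N) :
    (Nᵀ * S * N).PosDef := by
  rw [Matrix.posDef_iff_dotProduct_mulVec]
  constructor
  · have hSs : Sᵀ = S := by
      have h := hS.1.eq
      rwa [Matrix.conjTranspose_eq_transpose_of_trivial] at h
    show (Nᵀ * S * N)ᴴ = _
    rw [Matrix.conjTranspose_eq_transpose_of_trivial, Matrix.transpose_mul,
      Matrix.transpose_mul, Matrix.transpose_transpose, hSs, ← Matrix.mul_assoc]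
  · intro x hx
    have hNx : N *ᵥ x ≠ 0 := by
      have hinj : Function.Injective (N.mulVec) := Matrix.mulVec_injective_iff_isUnit.mpr hN
      intro hcontra
      apply hx
      apply hinj
      simpa using hcontra
    have := hS.dotProduct_mulVec_pos hNx
    simpa [Matrix.mulVec_mulVec, Matrix.dotProduct_mulVec, Matrix.vecMul_mulVec,
      ← Matrix.mul_assoc, star_mulVec, Matrix.conjTranspose_eq_transpose_of_trivial]
      using this

end Aux

/-- controller reconstruction, Theorem 2: If the dual pair `(W, L)`, with
`W(x)` symmetric positive definite, satisfies the LMI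
`[[W(f(x)+g(x)u), A(x,u)W(x)+B(x)L(x)], [(A(x,u)W(x)+B(x)L(x))ᵀ, (1−β)W(x)]] ≻ 0` for
all `x, u` (where `A(x,u) = ∂(f(x)+g(x)u)/∂x` and `B(x) = g(x)`), then `M(x) := W(x)⁻¹`
is symmetric positive definite and, with `K(x) := L(x) W(x)⁻¹`, the closed-loop
contraction condition
`(A + B K)ᵀ M(f(x)+g(x)u) (A + B K) − (1 − β) M(x) ≺ 0` holds for all `x, u`. -/
theorem stmt7 {n m : ℕ}
    (f : (Fin n → ℝ) → (Fin n → ℝ))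
    (g : (Fin n → ℝ) → Matrix (Fin n) (Fin m) ℝ)
    (A : (Fin n → ℝ) → (Fin m → ℝ) → Matrix (Fin n) (Fin n) ℝ)
    (hA : ∀ (x : Fin n → ℝ) (u : Fin m → ℝ),
      HasFDerivAt (fun y => f y + (g y).mulVec u)
        (LinearMap.toContinuousLinearMap (Matrix.mulVecLin (A x u))) x)
    (W : (Fin n → ℝ) → Matrix (Fin n) (Fin n) ℝ) (hW : ∀ x, (W x).PosDef)
    (L : (Fin n → ℝ) → Matrix (Fin m) (Fin n) ℝ)
    (M : (Fin n → ℝ) → Matrix (Fin n) (Fin n) ℝ) (hM : ∀ x, M x = (W x)⁻¹)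
    (K : (Fin n → ℝ) → Matrix (Fin m) (Fin n) ℝ) (hK : ∀ x, K x = L x * (W x)⁻¹)
    (β : ℝ) (hβ0 : 0 < β) (hβ1 : β ≤ 1)
    (hLMI : ∀ (x : Fin n → ℝ) (u : Fin m → ℝ),
      (Matrix.fromBlocks (W (f x + (g x).mulVec u))
        (A x u * W x + g x * L x) (A x u * W x + g x * L x)ᵀ ((1 - β) • W x)).PosDef) :
    (∀ x, (M x).PosDef) ∧
    (∀ (x : Fin n → ℝ) (u : Fin m → ℝ),
      (((1 - β) • M x) - (A x u + g x * K x)ᵀ * M (f x + (g x).mulVec u) *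
        (A x u + g x * K x)).PosDef) := by
  have hMposdef : ∀ x, (M x).PosDef := fun x => (hM x) ▸ (hW x).inv
  refine ⟨hMposdef, fun x u => ?_⟩
  set x' := f x + (g x).mulVec u with hx'
  set Bm := A x u * W x + g x * L x with hBm
  have hWx := hW x
  have hWx' := hW x'
  haveI := hWx.isUnit.invertible
  haveI := hWx'.isUnit.invertible
  -- rewrite the LMI in conjTranspose form
  have hLMI' : (Matrix.fromBlocks (W x') Bm Bmᴴ ((1 - β) • W x)).PosDef := by
    have := hLMI x u
    rwa [Matrix.conjTranspose_eq_transpose_of_trivial]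
  have hschur : ((1 - β) • W x - Bmᴴ * (W x')⁻¹ * Bm).PosDef :=
    posDef_schur hWx' hLMI'
  -- the closed-loop matrix
  set C := A x u + g x * K x with hC
  have hCW : C * W x = Bm := by
    simp [hC, hBm, hK, Matrix.add_mul, Matrix.mul_assoc, Matrix.inv_mul_of_invertible]
  have hMsymm : (M x)ᵀ = M x := by
    rw [← Matrix.conjTranspose_eq_transpose_of_trivial]; exact (hMposdef x).1
  have hWsymm : (W x)ᵀ = W x := by
    rw [← Matrix.conjTranspose_eq_transpose_of_trivial]; exact hWx.1
  have hkey : ((1 - β) • M x) - Cᵀ * M x' * C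
      = (M x)ᵀ * (((1 - β) • W x - Bmᴴ * (W x')⁻¹ * Bm) * M x) := by
    rw [hMsymm, Matrix.conjTranspose_eq_transpose_of_trivial, ← hCW, Matrix.transpose_mul,
      hWsymm, hM x, hM x']
    simp [Matrix.mul_sub, Matrix.sub_mul, Matrix.mul_smul, Matrix.smul_mul,
      Matrix.mul_assoc, Matrix.mul_inv_of_invertible, Matrix.inv_mul_of_invertible,
      Matrix.inv_mul_cancel_left_of_invertible, Matrix.mul_inv_cancel_left_of_invertible]
  rw [hkey, ← Matrix.mul_assoc]
  exact posDef_conj hschur (hMposdef x).isUnit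
end

section
/- Let n, m ∈ ℕ, f : ℝⁿ → ℝⁿ and g : ℝⁿ → Mat_{n×m}(ℝ) smooth, with differential-dynamics Jacobians A(x,u) = ∂(f(x)+g(x)u)/∂x and B(x) = g(x). Let W : ℝⁿ → Mat_{n×n}(ℝ) assign symmetric positive definite matrices, L : ℝⁿ → Mat_{m×n}(ℝ), and 0 < β ≤ 1, and suppose the block matrix [[W(f(x)+g(x)u), A(x,u)W(x) + B(x)L(x)], [(A(x,u)W(x) + B(x)L(x))ᵀ, (1 − β)W(x)]] is positive definite for all x ∈ ℝⁿ, u ∈ ℝᵐ. Let x : ℕ → ℝⁿ, u : ℕ → ℝᵐ be any closed-loop trajectory with x_{k+1} = f(x_k) + g(x_k) u_k, and let δ : ℕ → ℝⁿ satisfy the closed-loop differential dynamics δ_{k+1} = (A(x_k,u_k) + B(x_k) K(x_k)) δ_k, where K(x) := L(x) W(x)⁻¹. Then with M(x) := W(x)⁻¹, the generalized squared distance V_k := δ_kᵀ M(x_k) δ_k satisfies V_k ≤ (1 − β)^k V_0 for all k ∈ ℕ. -/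
open Matrix

/-- Lemma 1 + Theorem 2 combined: If the dual pair `(W, L)`, with `W(x)`
symmetric positive definite, satisfies the LMI
`[[W(f(x)+g(x)u), A(x,u)W(x)+B(x)L(x)], [(A(x,u)W(x)+B(x)L(x))ᵀ, (1−β)W(x)]] ≻ 0` for
all `x, u` (with `A(x,u) = ∂(f(x)+g(x)u)/∂x`, `B(x) = g(x)`), then along any closed-loop
trajectory `x_{k+1} = f(x_k) + g(x_k) u_k` with closed-loop differential dynamics
`δ_{k+1} = (A(x_k,u_k) + B(x_k) K(x_k)) δ_k`, `K(x) = L(x) W(x)⁻¹`, the generalized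
squared distance `V_k = δ_kᵀ M(x_k) δ_k` with `M(x) = W(x)⁻¹` satisfies
`V_k ≤ (1 − β)^k V_0`. -/
theorem stmt8 {n m : ℕ}
    (f : (Fin n → ℝ) → (Fin n → ℝ))
    (g : (Fin n → ℝ) → Matrix (Fin n) (Fin m) ℝ)
    (A : (Fin n → ℝ) → (Fin m → ℝ) → Matrix (Fin n) (Fin n) ℝ)
    (hA : ∀ (x : Fin n → ℝ) (u : Fin m → ℝ),
      HasFDerivAt (fun y => f y + (g y).mulVec u)
        (LinearMap.toContinuousLinearMap (Matrix.mulVecLin (A x u))) x)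
    (W : (Fin n → ℝ) → Matrix (Fin n) (Fin n) ℝ) (hW : ∀ x, (W x).PosDef)
    (L : (Fin n → ℝ) → Matrix (Fin m) (Fin n) ℝ)
    (β : ℝ) (hβ0 : 0 < β) (hβ1 : β ≤ 1)
    (hLMI : ∀ (x : Fin n → ℝ) (u : Fin m → ℝ),
      (Matrix.fromBlocks (W (f x + (g x).mulVec u))
        (A x u * W x + g x * L x) (A x u * W x + g x * L x)ᵀ ((1 - β) • W x)).PosDef)
    (K : (Fin n → ℝ) → Matrix (Fin m) (Fin n) ℝ) (hK : ∀ x, K x = L x * (W x)⁻¹)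
    (M : (Fin n → ℝ) → Matrix (Fin n) (Fin n) ℝ) (hM : ∀ x, M x = (W x)⁻¹)
    (x : ℕ → Fin n → ℝ) (u : ℕ → Fin m → ℝ)
    (hx : ∀ k, x (k + 1) = f (x k) + (g (x k)).mulVec (u k))
    (δ : ℕ → Fin n → ℝ)
    (hδ : ∀ k, δ (k + 1) = (A (x k) (u k) + g (x k) * K (x k)).mulVec (δ k))
    (V : ℕ → ℝ)
    (hV : ∀ k, V k = δ k ⬝ᵥ (M (x k)).mulVec (δ k)) :
    ∀ k, V k ≤ (1 - β) ^ k * V 0 := by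
  have hdet : ∀ y, IsUnit (W y).det := fun y =>
    (Matrix.isUnit_iff_isUnit_det _).1 (hW y).isUnit
  have key : ∀ k, V (k + 1) ≤ (1 - β) * V k := by
    intro k
    set Wk := W (x k) with hWk
    set Wp := W (x (k + 1)) with hWp
    set N := A (x k) (u k) * Wk + g (x k) * L (x k) with hN
    set b := Wk⁻¹ *ᵥ (δ k) with hb
    set c := N *ᵥ b with hc
    set a := -(Wp⁻¹ *ᵥ c) with ha
    have hδ1 : δ (k + 1) = c := by
      rw [hδ k, hK, hc, hb, mulVec_mulVec, hN, Matrix.add_mul,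
        Matrix.mul_nonsing_inv_cancel_right _ _ (hdet (x k)), Matrix.mul_assoc]
    have hWpa : Wp *ᵥ a = -c := by
      rw [ha, mulVec_neg, mulVec_mulVec, Matrix.mul_nonsing_inv _ (hdet (x (k+1))),
        one_mulVec]
    have hWkb : Wk *ᵥ b = δ k := by
      rw [hb, mulVec_mulVec, Matrix.mul_nonsing_inv _ (hdet (x k)), one_mulVec]
    have hps := ((hLMI (x k) (u k)).posSemidef).dotProduct_mulVec_nonneg (Sum.elim a b)
    rw [← hx k] at hps
    rw [fromBlocks_mulVec] at hps
    simp only [star_trivial, sumElim_dotProduct_sumElim, Sum.elim_comp_inl, Sum.elim_comp_inr] at hps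
    rw [← hN, ← hWp, ← hWk, ← hc, hWpa, neg_add_cancel, dotProduct_zero] at hps
    have hbN : b ⬝ᵥ (Nᵀ *ᵥ a) = c ⬝ᵥ a := by
      rw [dotProduct_mulVec, vecMul_transpose, hc]
    rw [dotProduct_add, hbN, smul_mulVec, hWkb, dotProduct_smul] at hps
    have hca : c ⬝ᵥ a = -(c ⬝ᵥ (Wp⁻¹ *ᵥ c)) := by rw [ha, dotProduct_neg]
    have hbd : b ⬝ᵥ δ k = V k := by
      rw [dotProduct_comm, hV k, hM, hb, hWk]
    rw [hca, hbd] at hps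
    have hV1 : V (k + 1) = c ⬝ᵥ (Wp⁻¹ *ᵥ c) := by
      rw [hV, hM, hδ1, hWp]
    rw [hV1]
    rw [smul_eq_mul] at hps; linarith [hps]
  intro k
  induction k with
  | zero => simp
  | succ k ih =>
    have h1 : 0 ≤ 1 - β := by linarith
    calc V (k + 1) ≤ (1 - β) * V k := key k
      _ ≤ (1 - β) * ((1 - β) ^ k * V 0) := by
          exact mul_le_mul_of_nonneg_left ih h1
      _ = (1 - β) ^ (k + 1) * V 0 := by ring
end
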